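/- Under assumptions (H1)–(H4), let b̃ = sup_{(u,v)∈U×V} |b(0,u,v)|, σ̃ = sup_{(x,u,v)} ‖σ(x,u,v)‖, and R = (b̃ + √(b̃² + Kσ̃²))/K. Suppose w₁, w₂ : ℝ^n → ℝ are twice continuously differentiable and bounded together with their first and second derivatives, ρ ∈ ℝ, and for all x ∈ ℝ^n: ρ ≤ sup_{v∈V} inf_{u∈U} H(x, Dw₁(x), D²w₁(x), u, v) and ρ ≥ sup_{v∈V} inf_{u∈U} H(x, Dw₂(x), D²w₂(x), u, v). If w₁(x) = w₂(x) for all x in the closed ball of radius R centered at the origin, then w₁(x) ≤ w₂(x) for all x ∈ ℝ^n. -/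

import Mathlib

open scoped RealInnerProductSpace
open Metric Filter MeasureTheory Matrix

noncomputable section

/-- `ℝ^n` as a Euclidean space. -/
abbrev En (n : ℕ) := EuclideanSpace ℝ (Fin n)

/-- The Frobenius (trace) norm of a real matrix. -/
def frobNorm {m k : ℕ} (A : Matrix (Fin m) (Fin k) ℝ) : ℝ :=
  Real.sqrt (∑ i, ∑ j, (A i j) ^ 2)

/-- The Hessian matrix of `φ` at `x`, with entries given by the second iterated
Fréchet derivative evaluated at pairs of standard basis vectors. -/
def hess {n : ℕ} (φ : En n → ℝ) (x : En n) : Matrix (Fin n) (Fin n) ℝ :=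
  Matrix.of fun i j =>
    iteratedFDeriv ℝ 2 φ x ![EuclideanSpace.single i 1, EuclideanSpace.single j 1]

/-- `C³_b(ℝ^n)`: three times continuously differentiable functions whose derivatives of
order 1 to 3 are bounded. -/
def C3b {n : ℕ} (φ : En n → ℝ) : Prop :=
  ContDiff ℝ 3 φ ∧
    ∀ i : ℕ, 1 ≤ i → i ≤ 3 → ∃ C : ℝ, ∀ x : En n, ‖iteratedFDeriv ℝ i φ x‖ ≤ C

/-- The Hamiltonian `H(x,p,A,u,v) = ½ tr(σσ^⊤ A) + ⟨b, p⟩ + f`. -/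
def Ham {n d : ℕ} {U V : Type*}
    (b : En n → U → V → En n) (σ : En n → U → V → Matrix (Fin n) (Fin d) ℝ)
    (f : En n → U → V → ℝ)
    (x p : En n) (A : Matrix (Fin n) (Fin n) ℝ) (u : U) (v : V) : ℝ :=
  (1 / 2) * Matrix.trace (σ x u v * (σ x u v)ᵀ * A) + (inner ℝ (b x u v) p : ℝ) + f x u v

/-- `(ρ, w)` is a viscosity subsolution of the ergodic equation `ρ = G(x, Dw(x), D²w(x))`. -/
def IsViscSubsol {n : ℕ} (G : En n → En n → Matrix (Fin n) (Fin n) ℝ → ℝ)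
    (ρ : ℝ) (w : En n → ℝ) : Prop :=
  Continuous w ∧
    ∀ φ : En n → ℝ, C3b φ → ∀ x : En n,
      IsLocalMax (fun y => w y - φ y) x → ρ ≤ G x (gradient φ x) (hess φ x)

/-- `(ρ, w)` is a viscosity supersolution of the ergodic equation `ρ = G(x, Dw(x), D²w(x))`. -/
def IsViscSupersol {n : ℕ} (G : En n → En n → Matrix (Fin n) (Fin n) ℝ → ℝ)
    (ρ : ℝ) (w : En n → ℝ) : Prop :=
  Continuous w ∧
    ∀ φ : En n → ℝ, C3b φ → ∀ x : En n,
      IsLocalMin (fun y => w y - φ y) x → ρ ≥ G x (gradient φ x) (hess φ x)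

/-- `(ρ, w)` is a viscosity solution of the ergodic equation `ρ = G(x, Dw(x), D²w(x))`. -/
def IsViscSol {n : ℕ} (G : En n → En n → Matrix (Fin n) (Fin n) ℝ → ℝ)
    (ρ : ℝ) (w : En n → ℝ) : Prop :=
  IsViscSubsol G ρ w ∧ IsViscSupersol G ρ w

namespace CmpAux

open Topology

variable {n d : ℕ}

lemma sum_apply' (s : Finset (Fin n)) (f : Fin n → En n) (j : Fin n) :
    (∑ i ∈ s, f i) j = ∑ i ∈ s, f i j := by
  induction s using Finset.cons_induction with
  | empty => rfl
  | cons a s ha ih => rw [Finset.sum_cons, Finset.sum_cons, ← ih]; rfl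

lemma sum_single_eq (ξ : En n) :
    ∑ i, ξ i • EuclideanSpace.single i (1:ℝ) = ξ := by
  ext j
  rw [sum_apply']
  simp [EuclideanSpace.single_apply]

lemma bilin_expand (F : En n →L[ℝ] En n →L[ℝ] ℝ) (ξ η : En n) :
    F ξ η = ∑ i, ∑ j, ξ i * η j * F (EuclideanSpace.single i 1) (EuclideanSpace.single j 1) := by
  have h1 : F ξ = ∑ i, ξ i • F (EuclideanSpace.single i 1) := by
    conv_lhs => rw [← sum_single_eq ξ]
    rw [_root_.map_sum]
    exact Finset.sum_congr rfl fun i _ => by rw [_root_.map_smul]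
  rw [h1, ContinuousLinearMap.sum_apply]
  refine Finset.sum_congr rfl fun i _ => ?_
  rw [ContinuousLinearMap.smul_apply]
  have h2 : F (EuclideanSpace.single i 1) η
      = ∑ j, η j • F (EuclideanSpace.single i 1) (EuclideanSpace.single j 1) := by
    conv_lhs => rw [← sum_single_eq η]
    rw [_root_.map_sum]
    exact Finset.sum_congr rfl fun j _ => by rw [_root_.map_smul]
  rw [h2, Finset.smul_sum]
  exact Finset.sum_congr rfl fun j _ => by simp [smul_eq_mul]; ring

lemma one_dim_test {h p : ℝ → ℝ} {c : ℝ}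
    (hd : ∀ t, HasDerivAt h (p t) t) (hp0 : p 0 = 0)
    (hdp : HasDerivAt p c 0) (hc : 0 < c) (hmax : IsLocalMax h 0) : False := by
  have hslope : Tendsto (slope p 0) (𝓝[≠] (0:ℝ)) (𝓝 c) :=
    hasDerivAt_iff_tendsto_slope.1 hdp
  have hev : ∀ᶠ t in 𝓝[>] (0:ℝ), 0 < slope p 0 t := by
    have h1 := hslope.eventually (eventually_gt_nhds hc)
    exact h1.filter_mono (nhdsWithin_mono _ fun t ht => ne_of_gt ht)
  rw [eventually_nhdsWithin_iff] at hev
  rcases Metric.eventually_nhds_iff.1 hev with ⟨δ, hδ, hball⟩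
  have hppos : ∀ t ∈ Set.Ioo (0:ℝ) δ, 0 < p t := by
    intro t ht
    have h1 : 0 < slope p 0 t := by
      apply hball _ ht.1
      simpa [Real.dist_eq, abs_of_pos ht.1] using ht.2
    rw [slope_def_field, hp0, sub_zero, sub_zero, div_pos_iff] at h1
    rcases h1 with ⟨h1, _⟩ | ⟨_, h2⟩
    · exact h1
    · linarith [ht.1]
  have hmono : StrictMonoOn h (Set.Icc 0 δ) := by
    apply strictMonoOn_of_deriv_pos (convex_Icc 0 δ)
    · exact fun t _ => ((hd t).continuousAt).continuousWithinAt
    · intro t ht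
      rw [interior_Icc] at ht
      rw [(hd t).deriv]
      exact hppos t ht
  have h2 : ∀ᶠ t in 𝓝[>] (0:ℝ), h t ≤ h 0 := hmax.filter_mono nhdsWithin_le_nhds
  have h3 : ∀ᶠ t in 𝓝[>] (0:ℝ), t < δ :=
    eventually_nhdsWithin_of_eventually_nhds (eventually_lt_nhds hδ)
  have h4 : ∀ᶠ t in 𝓝[>] (0:ℝ), 0 < t := self_mem_nhdsWithin
  rcases (h2.and (h3.and h4)).exists with ⟨t, hle, htδ, ht0⟩
  have : h 0 < h t :=
    hmono (Set.mem_Icc.2 ⟨le_refl 0, le_of_lt hδ⟩) (Set.mem_Icc.2 ⟨le_of_lt ht0, le_of_lt htδ⟩) ht0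
  linarith

lemma second_deriv_test {g : En n → ℝ} (hg : ContDiff ℝ 2 g) {x₀ : En n}
    (hmax : IsLocalMax g x₀) (ξ : En n) :
    fderiv ℝ (fderiv ℝ g) x₀ ξ ξ ≤ 0 := by
  by_contra hlt
  push_neg at hlt
  set L : ℝ → En n := fun t => x₀ + t • ξ with hLdef
  have hL0 : L 0 = x₀ := by simp [hLdef]
  have hLd : ∀ t, HasDerivAt L ξ t := by
    intro t
    simpa [hLdef] using ((hasDerivAt_id t).smul_const ξ).const_add x₀
  have hgd : Differentiable ℝ g := hg.differentiable (by norm_num)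
  have hf1 : ContDiff ℝ 1 (fderiv ℝ g) := hg.fderiv_right (by norm_num)
  have hfd : Differentiable ℝ (fderiv ℝ g) := hf1.differentiable (by norm_num)
  set p : ℝ → ℝ := fun t => fderiv ℝ g (L t) ξ with hpdef
  have hd : ∀ t, HasDerivAt (fun t => g (L t)) (p t) t := fun t =>
    (hgd (L t)).hasFDerivAt.comp_hasDerivAt t (hLd t)
  have hp0 : p 0 = 0 := by
    rw [hpdef]; simp only [hL0]
    rw [hmax.fderiv_eq_zero]; rfl
  have hdp : HasDerivAt p (fderiv ℝ (fderiv ℝ g) x₀ ξ ξ) 0 := by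
    have h1 : HasDerivAt (fun t => fderiv ℝ g (L t)) (fderiv ℝ (fderiv ℝ g) x₀ ξ) 0 := by
      have hx : HasFDerivAt (fderiv ℝ g) (fderiv ℝ (fderiv ℝ g) x₀) (L 0) := by
        rw [hL0]; exact (hfd x₀).hasFDerivAt
      exact hx.comp_hasDerivAt 0 (hLd 0)
    have h2 := (ContinuousLinearMap.apply ℝ ℝ ξ).hasFDerivAt.comp_hasDerivAt 0 h1
    exact h2
  have hmax' : IsLocalMax (fun t => g (L t)) 0 := by
    have hLc : Tendsto L (𝓝 0) (𝓝 x₀) := by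
      rw [← hL0]; exact (hLd 0).continuousAt.tendsto
    exact IsMaxFilter.comp_tendsto (show IsMaxFilter g (𝓝 x₀) (L 0) by rw [hL0]; exact hmax) hLc
  exact one_dim_test hd hp0 hdp hlt hmax'

/-- The inner-product pairing as a continuous linear map `En n →L[ℝ] En n →L[ℝ] ℝ`. -/
def T (n : ℕ) : En n →L[ℝ] (En n →L[ℝ] ℝ) :=
  (InnerProductSpace.toDual ℝ (En n)).toContinuousLinearEquiv.toContinuousLinearMap

lemma T_apply (x y : En n) : T n x y = ⟪x, y⟫ := by
  simp [T]

lemma chi_hasFDerivAt (x : En n) :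
    HasFDerivAt (fun y : En n => ‖y‖ ^ 2) ((2:ℝ) • T n x) x := by
  have h := (hasStrictFDerivAt_norm_sq x).hasFDerivAt
  refine h.congr_fderiv ?_
  ext y
  simp [T_apply, two_smul]

lemma max_point_derivs {w₁ w₂ : En n → ℝ} (hw₁ : ContDiff ℝ 2 w₁) (hw₂ : ContDiff ℝ 2 w₂)
    {ε : ℝ} {x₀ : En n}
    (hmax : IsLocalMax (fun x => w₁ x - w₂ x - ε * ‖x‖ ^ 2) x₀) :
    (∀ y : En n, fderiv ℝ w₁ x₀ y - fderiv ℝ w₂ x₀ y = 2 * ε * ⟪x₀, y⟫) ∧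
    (∀ ξ : En n, fderiv ℝ (fderiv ℝ w₁) x₀ ξ ξ - fderiv ℝ (fderiv ℝ w₂) x₀ ξ ξ
        ≤ 2 * ε * ‖ξ‖ ^ 2) := by
  set g : En n → ℝ := fun x => w₁ x - w₂ x - ε * ‖x‖ ^ 2 with hgdef
  have hχ : ContDiff ℝ 2 (fun x : En n => ε * ‖x‖ ^ 2) :=
    (contDiff_norm_sq (𝕜 := ℝ)).const_smul ε
  have hg : ContDiff ℝ 2 g := (hw₁.sub hw₂).sub hχ
  have hD1 : ∀ x : En n, HasFDerivAt g
      (fderiv ℝ w₁ x - fderiv ℝ w₂ x - (2 * ε) • T n x) x := by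
    intro x
    have h1 := ((hw₁.differentiable (by norm_num) x).hasFDerivAt.sub
      (hw₂.differentiable (by norm_num) x).hasFDerivAt).sub
      ((chi_hasFDerivAt x).const_smul ε)
    have h2 : ε • ((2:ℝ) • T n x) = (2 * ε) • T n x := by
      rw [smul_smul, mul_comm]
    rw [h2] at h1
    exact h1
  have hgradzero : fderiv ℝ g x₀ = 0 := hmax.fderiv_eq_zero
  have hfirst : ∀ y : En n, fderiv ℝ w₁ x₀ y - fderiv ℝ w₂ x₀ y = 2 * ε * ⟪x₀, y⟫ := by
    intro y
    have h0 := (hD1 x₀).fderiv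
    rw [hgradzero] at h0
    have h1 := congrArg (fun Q => Q y) h0.symm
    simp only [ContinuousLinearMap.zero_apply, ContinuousLinearMap.sub_apply,
      ContinuousLinearMap.smul_apply, T_apply, smul_eq_mul] at h1
    linarith
  have hfd : fderiv ℝ g = fun x => fderiv ℝ w₁ x - fderiv ℝ w₂ x - (2 * ε) • T n x :=
    funext fun x => (hD1 x).fderiv
  have hdw₁ : Differentiable ℝ (fderiv ℝ w₁) :=
    (hw₁.fderiv_right (m := 1) (by norm_num)).differentiable (by norm_num)
  have hdw₂ : Differentiable ℝ (fderiv ℝ w₂) :=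
    (hw₂.fderiv_right (m := 1) (by norm_num)).differentiable (by norm_num)
  have hD2 : HasFDerivAt (fderiv ℝ g)
      (fderiv ℝ (fderiv ℝ w₁) x₀ - fderiv ℝ (fderiv ℝ w₂) x₀ - (2 * ε) • T n) x₀ := by
    rw [hfd]
    exact ((hdw₁ x₀).hasFDerivAt.sub (hdw₂ x₀).hasFDerivAt).sub
      ((T n).hasFDerivAt.const_smul (2 * ε))
  have hsecond : ∀ ξ : En n, fderiv ℝ (fderiv ℝ w₁) x₀ ξ ξ - fderiv ℝ (fderiv ℝ w₂) x₀ ξ ξ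
      ≤ 2 * ε * ‖ξ‖ ^ 2 := by
    intro ξ
    have h1 := second_deriv_test hg hmax ξ
    rw [hD2.fderiv] at h1
    simp only [ContinuousLinearMap.sub_apply, ContinuousLinearMap.smul_apply, T_apply,
      smul_eq_mul] at h1
    have h3 : ⟪ξ, ξ⟫ = ‖ξ‖ ^ 2 := real_inner_self_eq_norm_sq ξ
    rw [h3] at h1
    linarith
  exact ⟨hfirst, hsecond⟩

/-- `k`-th column of a matrix as a Euclidean vector. -/
def col (S : Matrix (Fin n) (Fin d) ℝ) (k : Fin d) : En n :=
  (WithLp.equiv 2 (Fin n → ℝ)).symm (fun i => S i k)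

lemma col_apply (S : Matrix (Fin n) (Fin d) ℝ) (k : Fin d) (i : Fin n) :
    col S k i = S i k := rfl

lemma col_norm_sq (S : Matrix (Fin n) (Fin d) ℝ) (k : Fin d) :
    ‖col S k‖ ^ 2 = ∑ i, S i k ^ 2 := by
  rw [EuclideanSpace.norm_eq, Real.sq_sqrt (by positivity)]
  exact Finset.sum_congr rfl fun i _ => by rw [col_apply, Real.norm_eq_abs, sq_abs]

lemma frobNorm_sq (S : Matrix (Fin n) (Fin d) ℝ) :
    frobNorm S ^ 2 = ∑ i, ∑ j, S i j ^ 2 := by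
  rw [frobNorm, Real.sq_sqrt (by positivity)]

lemma frobNorm_nonneg (S : Matrix (Fin n) (Fin d) ℝ) : 0 ≤ frobNorm S := Real.sqrt_nonneg _

lemma sum_col_norm_sq (S : Matrix (Fin n) (Fin d) ℝ) :
    ∑ k, ‖col S k‖ ^ 2 = frobNorm S ^ 2 := by
  rw [frobNorm_sq, Finset.sum_comm]
  exact Finset.sum_congr rfl fun k _ => col_norm_sq S k

lemma hess_apply_eq (w : En n → ℝ) (x : En n) (i j : Fin n) :
    hess w x i j = fderiv ℝ (fderiv ℝ w) x (EuclideanSpace.single i 1)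
      (EuclideanSpace.single j 1) := by
  rw [hess, Matrix.of_apply, iteratedFDeriv_two_apply]
  simp

lemma trace_mul_hess (S : Matrix (Fin n) (Fin d) ℝ) (w : En n → ℝ) (x : En n) :
    Matrix.trace (S * Sᵀ * hess w x)
      = ∑ k, fderiv ℝ (fderiv ℝ w) x (col S k) (col S k) := by
  have hA : ∀ i j, hess w x i j = fderiv ℝ (fderiv ℝ w) x (EuclideanSpace.single i 1)
      (EuclideanSpace.single j 1) := hess_apply_eq w x
  set A := hess w x with hAdef
  have lhs1 : Matrix.trace (S * Sᵀ * A) = ∑ i, ∑ j, ∑ k, S i k * S j k * A j i := by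
    rw [Matrix.trace]
    refine Finset.sum_congr rfl fun i _ => ?_
    rw [Matrix.diag_apply, Matrix.mul_apply]
    refine Finset.sum_congr rfl fun j _ => ?_
    rw [Matrix.mul_apply, Finset.sum_mul]
    refine Finset.sum_congr rfl fun k _ => ?_
    rw [Matrix.transpose_apply]
  have rhs1 : ∀ k, fderiv ℝ (fderiv ℝ w) x (col S k) (col S k)
      = ∑ i, ∑ j, S i k * S j k * A i j := by
    intro k
    rw [bilin_expand]
    exact Finset.sum_congr rfl fun i _ => Finset.sum_congr rfl fun j _ => by
      rw [col_apply, col_apply, hA]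
  rw [lhs1]
  have step1 : ∑ i, ∑ j, ∑ k, S i k * S j k * A j i
      = ∑ k, ∑ i, ∑ j, S i k * S j k * A j i := by
    calc ∑ i, ∑ j, ∑ k, S i k * S j k * A j i
        = ∑ i, ∑ k, ∑ j, S i k * S j k * A j i :=
          Finset.sum_congr rfl fun i _ => Finset.sum_comm
      _ = ∑ k, ∑ i, ∑ j, S i k * S j k * A j i := Finset.sum_comm
  rw [step1]
  refine Finset.sum_congr rfl fun k _ => ?_
  rw [rhs1 k, Finset.sum_comm]
  exact Finset.sum_congr rfl fun i _ => Finset.sum_congr rfl fun j _ => by ring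

lemma inner_gradient (w : En n → ℝ) (x y : En n) :
    (inner ℝ y (gradient w x) : ℝ) = fderiv ℝ w x y := by
  rw [real_inner_comm]
  unfold gradient
  exact InnerProductSpace.toDual_symm_apply

end CmpAux

set_option maxHeartbeats 1000000 in
/-- classical C² comparison step in Corollary 4.1: under (H1)–(H4),
with `R = (b̃ + √(b̃² + Kσ̃²))/K`, if `w₁, w₂` are bounded `C²` functions with bounded first
and second derivatives, `ρ ≤ sup_v inf_u H(x, Dw₁, D²w₁, u, v)` and
`ρ ≥ sup_v inf_u H(x, Dw₂, D²w₂, u, v)` pointwise, and `w₁ = w₂` on `B̄_R(0)`, then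
`w₁ ≤ w₂` on `ℝ^n`. -/
theorem classical_C2_comparison
    {n d : ℕ} (hn : 1 ≤ n) (hd : 1 ≤ d)
    {U V : Type*} [MetricSpace U] [CompactSpace U] [Nonempty U]
    [MetricSpace V] [CompactSpace V] [Nonempty V]
    (b : En n → U → V → En n) (σ : En n → U → V → Matrix (Fin n) (Fin d) ℝ)
    (f : En n → U → V → ℝ)
    -- (H1)
    (H1b : ∀ x : En n, Continuous fun uv : U × V => b x uv.1 uv.2)
    (H1σ : ∀ x : En n, Continuous fun uv : U × V => σ x uv.1 uv.2)
    (H1f : ∀ x : En n, Continuous fun uv : U × V => f x uv.1 uv.2)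
    -- (H2)
    (Cb Cσ Cf : ℝ) (hCb : 0 < Cb) (hCσ : 0 < Cσ) (hCf : 0 < Cf)
    (H2b : ∀ (x y : En n) (u : U) (v : V), ‖b x u v - b y u v‖ ≤ Cb * ‖x - y‖)
    (H2σ : ∀ (x y : En n) (u : U) (v : V), frobNorm (σ x u v - σ y u v) ≤ Cσ * ‖x - y‖)
    (H2f : ∀ (x y : En n) (u : U) (v : V), |f x u v - f y u v| ≤ Cf * ‖x - y‖)
    -- (H3)
    (K : ℝ) (hK : Cσ ^ 2 < K)
    (H3 : ∀ (x y : En n) (u : U) (v : V),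
      2 * (inner ℝ (x - y) (b x u v - b y u v) : ℝ) ≤ -K * ‖x - y‖ ^ 2)
    -- (H4) together with `σ̃` the supremum of `‖σ‖`
    (σt : ℝ) (hσt : 0 < σt)
    (H4 : ∀ (x : En n) (u : U) (v : V), frobNorm (σ x u v) ≤ σt)
    (hσt_least : ∀ s : ℝ, (∀ (x : En n) (u : U) (v : V), frobNorm (σ x u v) ≤ s) → σt ≤ s)
    -- `b̃` the supremum of `|b(0,u,v)|`
    (bt : ℝ)
    (hbt : ∀ (u : U) (v : V), ‖b 0 u v‖ ≤ bt)
    (hbt_least : ∀ s : ℝ, (∀ (u : U) (v : V), ‖b 0 u v‖ ≤ s) → bt ≤ s)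
    -- `w₁, w₂` are C² and bounded together with their first and second derivatives
    (ρ : ℝ) (w₁ w₂ : En n → ℝ)
    (hw₁reg : ContDiff ℝ 2 w₁) (hw₂reg : ContDiff ℝ 2 w₂)
    (hw₁bd : ∃ C : ℝ, ∀ x : En n, |w₁ x| ≤ C ∧ ‖iteratedFDeriv ℝ 1 w₁ x‖ ≤ C ∧
      ‖iteratedFDeriv ℝ 2 w₁ x‖ ≤ C)
    (hw₂bd : ∃ C : ℝ, ∀ x : En n, |w₂ x| ≤ C ∧ ‖iteratedFDeriv ℝ 1 w₂ x‖ ≤ C ∧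
      ‖iteratedFDeriv ℝ 2 w₂ x‖ ≤ C)
    -- classical sub- and supersolution inequalities
    (hsub : ∀ x : En n,
      ρ ≤ ⨆ v : V, ⨅ u : U, Ham b σ f x (gradient w₁ x) (hess w₁ x) u v)
    (hsuper : ∀ x : En n,
      ρ ≥ ⨆ v : V, ⨅ u : U, Ham b σ f x (gradient w₂ x) (hess w₂ x) u v)
    -- agreement on the closed ball of radius `R`
    (hagree : ∀ x ∈ Metric.closedBall (0 : En n)
        ((bt + Real.sqrt (bt ^ 2 + K * σt ^ 2)) / K), w₁ x = w₂ x) :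
    ∀ x : En n, w₁ x ≤ w₂ x := by
  intro xb
  obtain ⟨u₀⟩ := ‹Nonempty U›
  obtain ⟨v₀⟩ := ‹Nonempty V›
  have key : ∀ ε : ℝ, 0 < ε → w₁ xb - w₂ xb ≤ ε * ‖xb‖ ^ 2 := by
    intro ε hε
    classical
    set g : En n → ℝ := fun x => w₁ x - w₂ x - ε * ‖x‖ ^ 2 with hgdef
    have hgc : Continuous g := by
      rw [hgdef]
      exact (hw₁reg.continuous.sub hw₂reg.continuous).sub
        (continuous_const.mul (continuous_norm.pow 2))
    obtain ⟨M₁, hM₁⟩ := hw₁bd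
    obtain ⟨M₂, hM₂⟩ := hw₂bd
    have hub : ∀ x : En n, g x ≤ M₁ + M₂ - ε * ‖x‖ ^ 2 := by
      intro x
      have h1 := (abs_le.1 (hM₁ x).1).2
      have h2 := (abs_le.1 (hM₂ x).1).1
      simp only [hgdef]
      linarith
    set a0 : ℝ := max 0 ((M₁ + M₂ - g 0) / ε) with ha0
    set r₀ : ℝ := Real.sqrt a0 + 1 with hr₀
    have hr₀pos : 0 < r₀ := by positivity
    have hout : ∀ x : En n, r₀ ≤ ‖x‖ → g x < g 0 := by
      intro x hx
      have hs : Real.sqrt a0 ^ 2 = a0 := Real.sq_sqrt (le_max_left _ _)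
      have hsn : 0 ≤ Real.sqrt a0 := Real.sqrt_nonneg _
      have ha : (M₁ + M₂ - g 0) / ε ≤ a0 := le_max_right _ _
      have h1 : (M₁ + M₂ - g 0) / ε < ‖x‖ ^ 2 := by nlinarith
      have h2 : M₁ + M₂ - g 0 < ε * ‖x‖ ^ 2 := by
        rw [div_lt_iff₀ hε] at h1
        nlinarith
      have h3 := hub x
      linarith
    have h0mem : (0 : En n) ∈ Metric.closedBall (0 : En n) r₀ := by
      simp [hr₀pos.le]
    obtain ⟨x₀, hx₀mem, hx₀max⟩ :=
      (isCompact_closedBall (0 : En n) r₀).exists_isMaxOn ⟨0, h0mem⟩ hgc.continuousOn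
    have hglobal : ∀ x : En n, g x ≤ g x₀ := by
      intro x
      by_cases hx : x ∈ Metric.closedBall (0 : En n) r₀
      · exact hx₀max hx
      · have hxn : r₀ ≤ ‖x‖ := by
          rw [Metric.mem_closedBall, dist_zero_right] at hx
          linarith [not_le.1 hx]
        exact le_trans (hout x hxn).le (hx₀max h0mem)
    have hlocmax : IsLocalMax g x₀ := Filter.Eventually.of_forall hglobal
    rw [hgdef] at hlocmax
    obtain ⟨hfirst, hsecond⟩ := CmpAux.max_point_derivs hw₁reg hw₂reg hlocmax
    by_cases hball : x₀ ∈ Metric.closedBall (0 : En n)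
        ((bt + Real.sqrt (bt ^ 2 + K * σt ^ 2)) / K)
    · have h1 : w₁ x₀ = w₂ x₀ := hagree x₀ hball
      have h2 : g xb ≤ g x₀ := hglobal xb
      have h3 : 0 ≤ ε * ‖x₀‖ ^ 2 := by positivity
      simp only [hgdef] at h2
      linarith
    · exfalso
      have hK0 : 0 < K := lt_trans (by positivity) hK
      have hbt0 : 0 ≤ bt := le_trans (norm_nonneg _) (hbt u₀ v₀)
      have hR : (bt + Real.sqrt (bt ^ 2 + K * σt ^ 2)) / K < ‖x₀‖ := by
        rw [Metric.mem_closedBall, dist_zero_right] at hball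
        exact not_le.1 hball
      have hquad : 0 < K * ‖x₀‖ ^ 2 - 2 * bt * ‖x₀‖ - σt ^ 2 := by
        have hs : Real.sqrt (bt ^ 2 + K * σt ^ 2) ^ 2 = bt ^ 2 + K * σt ^ 2 :=
          Real.sq_sqrt (by positivity)
        have hsn : 0 ≤ Real.sqrt (bt ^ 2 + K * σt ^ 2) := Real.sqrt_nonneg _
        rw [div_lt_iff₀ hK0] at hR
        nlinarith
      have hc : ε * (σt ^ 2 + 2 * bt * ‖x₀‖ - K * ‖x₀‖ ^ 2) < 0 := by nlinarith
      have keyuv : ∀ (u : U) (v : V),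
          Ham b σ f x₀ (gradient w₁ x₀) (hess w₁ x₀) u v
            ≤ Ham b σ f x₀ (gradient w₂ x₀) (hess w₂ x₀) u v
              + ε * (σt ^ 2 + 2 * bt * ‖x₀‖ - K * ‖x₀‖ ^ 2) := by
        intro u v
        have htr : Matrix.trace (σ x₀ u v * (σ x₀ u v)ᵀ * hess w₁ x₀)
            - Matrix.trace (σ x₀ u v * (σ x₀ u v)ᵀ * hess w₂ x₀) ≤ 2 * ε * σt ^ 2 := by
          rw [CmpAux.trace_mul_hess, CmpAux.trace_mul_hess, ← Finset.sum_sub_distrib]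
          calc ∑ k, (fderiv ℝ (fderiv ℝ w₁) x₀ (CmpAux.col (σ x₀ u v) k) (CmpAux.col (σ x₀ u v) k)
                - fderiv ℝ (fderiv ℝ w₂) x₀ (CmpAux.col (σ x₀ u v) k) (CmpAux.col (σ x₀ u v) k))
              ≤ ∑ k, 2 * ε * ‖CmpAux.col (σ x₀ u v) k‖ ^ 2 :=
                Finset.sum_le_sum fun k _ => hsecond _
            _ = 2 * ε * frobNorm (σ x₀ u v) ^ 2 := by
                rw [← Finset.mul_sum, CmpAux.sum_col_norm_sq]
            _ ≤ 2 * ε * σt ^ 2 := by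
                have h2 := H4 x₀ u v
                have h3 := CmpAux.frobNorm_nonneg (σ x₀ u v)
                have h4 : frobNorm (σ x₀ u v) ^ 2 ≤ σt ^ 2 := by nlinarith
                nlinarith [mul_nonneg hε.le (sub_nonneg.2 h4)]
        have hin : (inner ℝ (b x₀ u v) (gradient w₁ x₀) : ℝ)
            - (inner ℝ (b x₀ u v) (gradient w₂ x₀) : ℝ)
            ≤ ε * (2 * bt * ‖x₀‖ - K * ‖x₀‖ ^ 2) := by
          rw [CmpAux.inner_gradient, CmpAux.inner_gradient, hfirst (b x₀ u v)]
          have h3 := H3 x₀ 0 u v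
          simp only [sub_zero] at h3
          have h4 : (inner ℝ x₀ (b 0 u v) : ℝ) ≤ ‖x₀‖ * bt :=
            le_trans (real_inner_le_norm _ _)
              (mul_le_mul_of_nonneg_left (hbt u v) (norm_nonneg _))
          have h5 : (inner ℝ x₀ (b x₀ u v) : ℝ) = (inner ℝ x₀ (b x₀ u v - b 0 u v) : ℝ)
              + (inner ℝ x₀ (b 0 u v) : ℝ) := by rw [inner_sub_right]; ring
          have h6 : 2 * (inner ℝ x₀ (b x₀ u v) : ℝ) ≤ 2 * bt * ‖x₀‖ - K * ‖x₀‖ ^ 2 := by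
            nlinarith
          nlinarith [mul_le_mul_of_nonneg_left h6 hε.le]
        simp only [Ham]
        linarith
      have hcont : ∀ (p : En n) (A : Matrix (Fin n) (Fin n) ℝ),
          Continuous fun uv : U × V => Ham b σ f x₀ p A uv.1 uv.2 := by
        intro p A
        have h1 : Continuous fun uv : U × V => σ x₀ uv.1 uv.2 := H1σ x₀
        refine Continuous.add (Continuous.add ?_ ?_) (H1f x₀)
        · exact continuous_const.mul
            (((h1.matrix_mul h1.matrix_transpose).matrix_mul continuous_const).matrix_trace)
        · exact Continuous.inner (H1b x₀) continuous_const
      obtain ⟨C₁, hC₁⟩ : ∃ C, ∀ (u : U) (v : V),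
          |Ham b σ f x₀ (gradient w₁ x₀) (hess w₁ x₀) u v| ≤ C := by
        obtain ⟨C, hC⟩ := (isCompact_range
          (hcont (gradient w₁ x₀) (hess w₁ x₀))).isBounded.subset_closedBall 0
        exact ⟨C, fun u v => by
          have := hC (Set.mem_range_self (u, v))
          rwa [Metric.mem_closedBall, Real.dist_eq, sub_zero] at this⟩
      obtain ⟨C₂, hC₂⟩ : ∃ C, ∀ (u : U) (v : V),
          |Ham b σ f x₀ (gradient w₂ x₀) (hess w₂ x₀) u v| ≤ C := by
        obtain ⟨C, hC⟩ := (isCompact_range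
          (hcont (gradient w₂ x₀) (hess w₂ x₀))).isBounded.subset_closedBall 0
        exact ⟨C, fun u v => by
          have := hC (Set.mem_range_self (u, v))
          rwa [Metric.mem_closedBall, Real.dist_eq, sub_zero] at this⟩
      have hbdd₁ : ∀ v : V, BddBelow (Set.range fun u =>
          Ham b σ f x₀ (gradient w₁ x₀) (hess w₁ x₀) u v) := fun v =>
        ⟨-C₁, by rintro y ⟨u, rfl⟩; linarith [(abs_le.1 (hC₁ u v)).1]⟩
      have hbdd₂b : ∀ v : V, BddBelow (Set.range fun u =>
          Ham b σ f x₀ (gradient w₂ x₀) (hess w₂ x₀) u v) := fun v =>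
        ⟨-C₂, by rintro y ⟨u, rfl⟩; linarith [(abs_le.1 (hC₂ u v)).1]⟩
      have hbdd₂a : BddAbove (Set.range fun v =>
          ⨅ u, Ham b σ f x₀ (gradient w₂ x₀) (hess w₂ x₀) u v) := by
        refine ⟨C₂, ?_⟩
        rintro y ⟨v, rfl⟩
        exact le_trans (ciInf_le (hbdd₂b v) u₀) (abs_le.1 (hC₂ u₀ v)).2
      have h1 : ∀ v : V, (⨅ u, Ham b σ f x₀ (gradient w₁ x₀) (hess w₁ x₀) u v)
          ≤ (⨅ u, Ham b σ f x₀ (gradient w₂ x₀) (hess w₂ x₀) u v)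
            + ε * (σt ^ 2 + 2 * bt * ‖x₀‖ - K * ‖x₀‖ ^ 2) := by
        intro v
        have hlow : ∀ u : U,
            (⨅ u', Ham b σ f x₀ (gradient w₁ x₀) (hess w₁ x₀) u' v)
              - ε * (σt ^ 2 + 2 * bt * ‖x₀‖ - K * ‖x₀‖ ^ 2)
              ≤ Ham b σ f x₀ (gradient w₂ x₀) (hess w₂ x₀) u v := fun u => by
          linarith [le_trans (ciInf_le (hbdd₁ v) u) (keyuv u v)]
        have h2 := le_ciInf hlow
        linarith
      have hchain : (⨆ v, ⨅ u, Ham b σ f x₀ (gradient w₁ x₀) (hess w₁ x₀) u v)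
          ≤ ρ + ε * (σt ^ 2 + 2 * bt * ‖x₀‖ - K * ‖x₀‖ ^ 2) := by
        apply ciSup_le
        intro v
        have h2 : (⨅ u, Ham b σ f x₀ (gradient w₂ x₀) (hess w₂ x₀) u v)
            ≤ ⨆ v', ⨅ u, Ham b σ f x₀ (gradient w₂ x₀) (hess w₂ x₀) u v' :=
          le_ciSup hbdd₂a v
        have h3 := hsuper x₀
        have h4 := h1 v
        linarith
      have h4 := hsub x₀
      linarith
  by_contra hcon
  push_neg at hcon
  have hc0 : 0 < w₁ xb - w₂ xb := by linarith
  have h := key ((w₁ xb - w₂ xb) / (2 * (‖xb‖ ^ 2 + 1))) (by positivity)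
  rw [div_mul_eq_mul_div, le_div_iff₀ (by positivity)] at h
  nlinarith [sq_nonneg ‖xb‖]
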